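/- arXiv:1304.4341 — 5 statements merged into one kernel-verified Lean document; each statement's English description precedes it below -/
import Mathlib

section
/- Let H be a complex Hilbert space, M a unital *-subalgebra of B(H), α : M → B(H) a map with α(x*) = α(x)* for all x ∈ M, and u ∈ B(H) an isometry (u*u = 1) such that u ∘ x = α(x) ∘ u for all x ∈ M. Then {T ∈ B(H) : α(x)T = Tx for all x ∈ M} = {y ∘ u : y ∈ B(H) and yα(x) = α(x)y for all x ∈ M}; that is, the intertwiner space E^α equals α(M)′·u, where α(M)′ is the commutant of the image of α. -/
/-- Let `H` be a complex Hilbert space, `M` a unital *-subalgebra of `B(H)`,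
`α : M → B(H)` a map with `α(x*) = α(x)*` for all `x ∈ M`, and `u ∈ B(H)` an isometry
(`u*u = 1`) such that `u ∘ x = α(x) ∘ u` for all `x ∈ M`. Then the intertwiner space
`E^α = {T : α(x)T = Tx ∀ x ∈ M}` equals `α(M)′·u`, where `α(M)′` is the commutant of the
image of `α`. -/
theorem stmt3 {H : Type*} [NormedAddCommGroup H] [InnerProductSpace ℂ H] [CompleteSpace H]
    (M : StarSubalgebra ℂ (H →L[ℂ] H))
    (α : (H →L[ℂ] H) → (H →L[ℂ] H))
    (hα : ∀ x ∈ M, α (star x) = star (α x))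
    (u : H →L[ℂ] H) (hu : star u * u = 1)
    (huα : ∀ x ∈ M, u * x = α x * u) :
    {T : H →L[ℂ] H | ∀ x ∈ M, α x * T = T * x} =
      {T : H →L[ℂ] H | ∃ y : H →L[ℂ] H, (∀ x ∈ M, y * α x = α x * y) ∧ T = y * u} := by
  ext T
  simp only [Set.mem_setOf_eq]
  constructor
  · intro hT
    refine ⟨T * star u, fun x hx => ?_, ?_⟩
    · have h1 : u * star x = α (star x) * u := huα (star x) (star_mem hx)
      rw [hα x hx] at h1
      have h2 : star u * α x = x * star u := by
        have := congrArg star h1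
        simpa [star_mul] using this.symm
      calc T * star u * α x = T * (star u * α x) := by rw [mul_assoc]
        _ = T * (x * star u) := by rw [h2]
        _ = (T * x) * star u := by rw [mul_assoc]
        _ = (α x * T) * star u := by rw [hT x hx]
        _ = α x * (T * star u) := by rw [mul_assoc]
    · rw [mul_assoc, hu, mul_one]
  · rintro ⟨y, hy, rfl⟩ x hx
    calc α x * (y * u) = y * (α x * u) := by rw [← mul_assoc, ← hy x hx, mul_assoc]
      _ = y * (u * x) := by rw [huα x hx]
      _ = y * u * x := by rw [mul_assoc]
end

section
/- Let H be a complex Hilbert space, M a unital *-subalgebra of B(H), and Ω ∈ H a vector that is cyclic for the commutant M′ (i.e. {yΩ : y ∈ M′} is dense in H). Let α : M → B(H) be a map and u ∈ B(H) an isometry with uΩ = Ω. If T ∈ B(H) satisfies α(x)T = Tx for all x ∈ M and T* ∘ (y ∘ u) = 0 for every y ∈ M′, then T = 0. (This is the key step showing that the intertwiner space E^α coincides with the closure of M′u.) -/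
/-- Let `H` be a complex Hilbert space, `M` a unital *-subalgebra of `B(H)`,
and `Ω ∈ H` a vector that is cyclic for the commutant `M′`. Let `α : M → B(H)` be a map and
`u ∈ B(H)` an isometry with `uΩ = Ω`. If `T ∈ B(H)` satisfies `α(x)T = Tx` for all `x ∈ M`
and `T* ∘ (y ∘ u) = 0` for every `y ∈ M′`, then `T = 0`. -/
theorem stmt4 {H : Type*} [NormedAddCommGroup H] [InnerProductSpace ℂ H] [CompleteSpace H]
    (M : StarSubalgebra ℂ (H →L[ℂ] H)) (Ω : H)
    (hcyc : Dense {ξ : H | ∃ y : H →L[ℂ] H, (∀ x ∈ M, y * x = x * y) ∧ y Ω = ξ})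
    (α : (H →L[ℂ] H) → (H →L[ℂ] H))
    (u : H →L[ℂ] H) (hu : star u * u = 1) (huΩ : u Ω = Ω)
    (T : H →L[ℂ] H)
    (hT : ∀ x ∈ M, α x * T = T * x)
    (horth : ∀ y : H →L[ℂ] H, (∀ x ∈ M, y * x = x * y) → star T * (y * u) = 0) :
    T = 0 := by
  have hstar : star T = 0 := by
    ext ξ
    have hzero : ∀ ζ ∈ {ξ : H | ∃ y : H →L[ℂ] H, (∀ x ∈ M, y * x = x * y) ∧ y Ω = ξ},
        star T ζ = 0 := by
      rintro ζ ⟨y, hy, rfl⟩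
      have h0 := horth y hy
      have : (star T * (y * u)) Ω = 0 := by rw [h0]; rfl
      simpa [ContinuousLinearMap.mul_apply, huΩ] using this
    have := Continuous.ext_on hcyc (star T).continuous continuous_const hzero
    exact congrFun this ξ
  have := congrArg star hstar
  simpa using this
end

section
/- Let H be a complex Hilbert space, M a *-subalgebra of B(H), α : M → M a map with α(x*) = α(x)* for all x ∈ M, and u ∈ B(H) an isometry (u*u = 1) with u ∘ x = α(x) ∘ u for all x ∈ M. Suppose in addition there is a map α′ : M′ → M′ with u ∘ y = α′(y) ∘ u for all y ∈ M′ (the equi-modular situation). Then {u*yu : y ∈ M′} = M′. -/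
/-- Let `H` be a complex Hilbert space, `M` a *-subalgebra of `B(H)`,
`α : M → M` a map with `α(x*) = α(x)*` for all `x ∈ M`, and `u ∈ B(H)` an isometry
(`u*u = 1`) with `u ∘ x = α(x) ∘ u` for all `x ∈ M`. Suppose in addition there is a map
`α′ : M′ → M′` with `u ∘ y = α′(y) ∘ u` for all `y ∈ M′` (the equi-modular situation).
Then `{u*yu : y ∈ M′} = M′`. -/
theorem stmt6 {H : Type*} [NormedAddCommGroup H] [InnerProductSpace ℂ H] [CompleteSpace H]
    (M : NonUnitalStarSubalgebra ℂ (H →L[ℂ] H))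
    (α : (H →L[ℂ] H) → (H →L[ℂ] H))
    (hαmem : ∀ x ∈ M, α x ∈ M)
    (hα : ∀ x ∈ M, α (star x) = star (α x))
    (u : H →L[ℂ] H) (hu : star u * u = 1)
    (huα : ∀ x ∈ M, u * x = α x * u)
    (α' : (H →L[ℂ] H) → (H →L[ℂ] H))
    (hα'mem : ∀ y : H →L[ℂ] H, (∀ x ∈ M, y * x = x * y) →
      (∀ x ∈ M, α' y * x = x * α' y))
    (huα' : ∀ y : H →L[ℂ] H, (∀ x ∈ M, y * x = x * y) → u * y = α' y * u) :
    {z : H →L[ℂ] H | ∃ y : H →L[ℂ] H, (∀ x ∈ M, y * x = x * y) ∧ z = star u * y * u} =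
      {y : H →L[ℂ] H | ∀ x ∈ M, y * x = x * y} := by
  ext z
  constructor
  · rintro ⟨y, hy, rfl⟩
    intro x hx
    -- key: x * star u = star u * α x
    have key : x * star u = star u * α x := by
      have h1 := huα (star x) (star_mem hx)
      have h2 := congrArg star h1
      simp only [star_mul, star_star, hα x hx] at h2
      simpa using h2
    -- y commutes with α x since α x ∈ M
    have hyc : y * α x = α x * y := hy (α x) (hαmem x hx)
    calc star u * y * u * x = star u * (y * (u * x)) := by simp only [mul_assoc]
      _ = star u * (y * (α x * u)) := by rw [huα x hx]
      _ = star u * ((α x * y) * u) := by rw [← mul_assoc y, hyc]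
      _ = (star u * α x) * (y * u) := by simp only [mul_assoc]
      _ = (x * star u) * (y * u) := by rw [key]
      _ = x * (star u * y * u) := by simp only [mul_assoc]
  · intro hz
    refine ⟨α' z, hα'mem z hz, ?_⟩
    calc z = 1 * z := (one_mul z).symm
      _ = (star u * u) * z := by rw [hu]
      _ = star u * (u * z) := by simp only [mul_assoc]
      _ = star u * (α' z * u) := by rw [huα' z hz]
      _ = star u * α' z * u := by simp only [mul_assoc]
end

section
/- In the concrete quasi-free CAR model with λ : ℤ → ℝ, 0 < λ_l < 1 for all l, the operators a_l satisfy the canonical anticommutation relations: for all l, m ∈ ℤ, a_l∘a_m + a_m∘a_l = 0 and a_l∘a_m* + a_m*∘a_l = δ_{l,m}·1, where δ_{l,m} is 1 if l = m and 0 otherwise. -/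
/- The concrete quasi-free CAR model: `H = ℓ²(Finset ℤ × Finset ℤ)` with orthonormal basis
`e (A, B)`, vacuum `Ω = e (∅, ∅)`, and operators `a l`, `b l`, `G` given on the basis by the
quasi-free formulas with symbol `λ` (diagonal, `R h_l = λ_l h_l`). -/

noncomputable section

/-- The GNS Hilbert space: `ℓ²` over pairs of finite subsets of `ℤ`. -/
abbrev CARSpace := lp (fun _ : Finset ℤ × Finset ℤ => ℂ) 2

/-- The orthonormal basis vector `e_{(A,B)}`. -/
def carE (p : Finset ℤ × Finset ℤ) : CARSpace := lp.single 2 p 1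

/-- The vacuum vector `Ω = e_{(∅,∅)}`. -/
def carΩ : CARSpace := carE (∅, ∅)

/-- `n(l, X)` = number of elements of `X` strictly below `l`. -/
def nlt (l : ℤ) (X : Finset ℤ) : ℕ := (X.filter fun j => j < l).card

/-- `a` is the family of quasi-free annihilation-type operators `a_l = π_R(a(h_l))`:
`a_l e_{(A,B)} = √(1−λ_l)·(−1)^{|B|}·(−1)^{n(l,A)}·[l ∉ A]·e_{(A∪{l},B)}
              + √(λ_l)·(−1)^{n(l,B)}·[l ∈ B]·e_{(A,B∖{l})}`. -/
def IsCAR_a (lam : ℤ → ℝ) (a : ℤ → CARSpace →L[ℂ] CARSpace) : Prop :=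
  ∀ (l : ℤ) (A B : Finset ℤ),
    a l (carE (A, B)) =
      ((Real.sqrt (1 - lam l) : ℂ) * (-1) ^ B.card * (-1) ^ nlt l A *
          (if l ∈ A then 0 else 1)) • carE (insert l A, B) +
      ((Real.sqrt (lam l) : ℂ) * (-1) ^ nlt l B *
          (if l ∈ B then 1 else 0)) • carE (A, B.erase l)

/-- `b` is the family of commutant quasi-free operators:
`b_l e_{(A,B)} = √(λ_l)·(−1)^{|B|}·(−1)^{n(l,A)}·[l ∉ A]·e_{(A∪{l},B)}
              − √(1−λ_l)·(−1)^{n(l,B)}·[l ∈ B]·e_{(A,B∖{l})}`. -/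
def IsCAR_b (lam : ℤ → ℝ) (b : ℤ → CARSpace →L[ℂ] CARSpace) : Prop :=
  ∀ (l : ℤ) (A B : Finset ℤ),
    b l (carE (A, B)) =
      ((Real.sqrt (lam l) : ℂ) * (-1) ^ B.card * (-1) ^ nlt l A *
          (if l ∈ A then 0 else 1)) • carE (insert l A, B) -
      ((Real.sqrt (1 - lam l) : ℂ) * (-1) ^ nlt l B *
          (if l ∈ B then 1 else 0)) • carE (A, B.erase l)

/-- `G = Γ⊗Γ` : `G e_{(A,B)} = (−1)^{|A|+|B|} e_{(A,B)}`. -/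
def IsCAR_G (G : CARSpace →L[ℂ] CARSpace) : Prop :=
  ∀ (A B : Finset ℤ), G (carE (A, B)) = ((-1 : ℂ) ^ (A.card + B.card)) • carE (A, B)

local notation "⟪" x ", " y "⟫" => @inner ℂ _ _ x y

private lemma carE_apply (p q : Finset ℤ × Finset ℤ) :
    (carE p : ∀ _ : Finset ℤ × Finset ℤ, ℂ) q = if q = p then 1 else 0 := by
  by_cases h : q = p
  · subst h; simp [carE, lp.single_apply_self]
  · simp [carE, lp.single_apply_ne _ _ _ h, h]

private lemma inner_carE_left (p : Finset ℤ × Finset ℤ) (f : CARSpace) : ⟪carE p, f⟫ = f p := by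
  rw [carE, lp.inner_single_left]
  simp [RCLike.inner_apply]

private lemma coord_ext {x y : CARSpace} (h : ∀ q, ⟪carE q, x⟫ = ⟪carE q, y⟫) : x = y := by
  apply lp.ext; funext q
  have := h q
  rwa [inner_carE_left, inner_carE_left] at this

private lemma inner_carE (p q : Finset ℤ × Finset ℤ) :
    ⟪carE p, carE q⟫ = if p = q then 1 else 0 := by
  rw [inner_carE_left, carE_apply]

private lemma single_eq_smul (q : Finset ℤ × Finset ℤ) (c : ℂ) :
    lp.single 2 q c = c • carE q := by
  rw [carE, ← lp.single_smul]; norm_num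

private lemma opext {T S : CARSpace →L[ℂ] CARSpace}
    (h : ∀ p, T (carE p) = S (carE p)) : T = S := by
  apply ContinuousLinearMap.ext; intro f
  have hf : HasSum (fun q => lp.single 2 q (f q)) f :=
    lp.hasSum_single ENNReal.ofNat_ne_top f
  exact (hf.mapL T).unique <| by
    simpa only [single_eq_smul, map_smul, h] using hf.mapL S

private lemma nlt_insert {m : ℤ} {A : Finset ℤ} (h : m ∉ A) (l : ℤ) :
    nlt l (insert m A) = (if m < l then 1 else 0) + nlt l A := by
  unfold nlt
  rw [Finset.filter_insert]
  split_ifs with hm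
  · rw [Finset.card_insert_of_notMem (fun hc => h (Finset.mem_of_mem_filter m hc))]
    omega
  · simp

private lemma nlt_erase {m : ℤ} {B : Finset ℤ} (h : m ∈ B) (l : ℤ) :
    nlt l B = (if m < l then 1 else 0) + nlt l (B.erase m) := by
  have := nlt_insert (Finset.notMem_erase m B) l
  rwa [Finset.insert_erase h] at this

private lemma pow_nlt_insert {m : ℤ} {A : Finset ℤ} (h : m ∉ A) (l : ℤ) :
    ((-1 : ℂ)) ^ nlt l (insert m A) = (if m < l then -1 else 1) * (-1) ^ nlt l A := by
  rw [nlt_insert h, pow_add]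
  split_ifs <;> simp

private lemma pow_nlt_erase {m : ℤ} {B : Finset ℤ} (h : m ∈ B) (l : ℤ) :
    ((-1 : ℂ)) ^ nlt l (B.erase m) = (if m < l then -1 else 1) * (-1) ^ nlt l B := by
  rw [nlt_erase h l, pow_add]
  split_ifs <;> simp

private lemma nlt_erase_self (l : ℤ) (A : Finset ℤ) : nlt l (A.erase l) = nlt l A := by
  by_cases h : l ∈ A
  · have := nlt_erase h l; simp at this; omega
  · rw [Finset.erase_eq_of_notMem h]

private lemma nlt_insert_self {l : ℤ} {A : Finset ℤ} (h : l ∉ A) :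
    nlt l (insert l A) = nlt l A := by
  rw [nlt_insert h]; simp

private lemma pow_card_insert {m : ℤ} {A : Finset ℤ} (h : m ∉ A) :
    ((-1 : ℂ)) ^ (insert m A).card = -(-1) ^ A.card := by
  rw [Finset.card_insert_of_notMem h, pow_succ]; ring

private lemma pow_card_erase {m : ℤ} {B : Finset ℤ} (h : m ∈ B) :
    ((-1 : ℂ)) ^ (B.erase m).card = -(-1) ^ B.card := by
  have := Finset.card_erase_add_one h
  rw [← this, pow_succ]; ring

private lemma sign_sq (n : ℕ) : ((-1 : ℂ) ^ n) ^ 2 = 1 := by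
  rw [← pow_mul, mul_comm, pow_mul]; norm_num

lemma star_a_apply {lam : ℤ → ℝ} {a : ℤ → CARSpace →L[ℂ] CARSpace}
    (ha : IsCAR_a lam a) (l : ℤ) (A B : Finset ℤ) :
    star (a l) (carE (A, B)) =
      ((Real.sqrt (1 - lam l) : ℂ) * (-1) ^ B.card * (-1) ^ nlt l A *
          (if l ∈ A then 1 else 0)) • carE (A.erase l, B) +
      ((Real.sqrt (lam l) : ℂ) * (-1) ^ nlt l B *
          (if l ∈ B then 0 else 1)) • carE (A, insert l B) := by
  apply coord_ext
  rintro ⟨C, D⟩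
  rw [ContinuousLinearMap.star_eq_adjoint, ContinuousLinearMap.adjoint_inner_right, ha l C D]
  simp only [inner_add_left, inner_smul_left, inner_add_right, inner_smul_right, inner_carE,
    map_mul, map_pow, map_neg, map_one, Complex.conj_ofReal, apply_ite (starRingEnd ℂ),
    map_zero]
  congr 1
  · rcases eq_or_ne ((C, D) : Finset ℤ × Finset ℤ) (A.erase l, B) with h2 | h2
    · obtain ⟨hC, hD⟩ := Prod.mk.inj h2
      subst hC; subst hD
      by_cases hlA : l ∈ A
      · simp [Finset.notMem_erase, Finset.insert_erase hlA, hlA, nlt_erase_self]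
      · have hne : insert l (A.erase l) ≠ A := by
          rw [Finset.erase_eq_of_notMem hlA]
          intro hE; exact hlA (hE ▸ Finset.mem_insert_self l A)
        simp [hlA, Finset.notMem_erase, hne, Prod.ext_iff]
    · rw [if_neg h2, mul_zero]
      by_cases h3 : ((insert l C, D) : Finset ℤ × Finset ℤ) = (A, B)
      · obtain ⟨hA, hB⟩ := Prod.mk.inj h3
        by_cases hlC : l ∈ C
        · simp [hlC]
        · have hAe : A.erase l = C := by rw [← hA]; exact Finset.erase_insert hlC
          exact absurd (by rw [← hAe, ← hB]) h2
      · simp [h3]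
  · rcases eq_or_ne ((C, D) : Finset ℤ × Finset ℤ) (A, insert l B) with h2 | h2
    · obtain ⟨hC, hD⟩ := Prod.mk.inj h2
      subst hC; subst hD
      by_cases hlB : l ∈ B
      · have hDB : insert l B = B := Finset.insert_eq_self.mpr hlB
        have hne : B.erase l ≠ B := by
          intro h; have h' := Finset.notMem_erase l B; rw [h] at h'; exact h' hlB
        simp [hlB, hDB, hne, Prod.ext_iff]
      · simp [hlB, Finset.mem_insert_self, Finset.erase_insert hlB, nlt_insert_self hlB]
    · rw [if_neg h2, mul_zero]
      by_cases h3 : ((C, D.erase l) : Finset ℤ × Finset ℤ) = (A, B)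
      · obtain ⟨hA, hB⟩ := Prod.mk.inj h3
        by_cases hlD : l ∈ D
        · exact absurd (by rw [← hA, ← hB, Finset.insert_erase hlD]) h2
        · simp [hlD]
      · simp [h3]
lemma a_sq {lam : ℤ → ℝ} {a : ℤ → CARSpace →L[ℂ] CARSpace}
    (ha : IsCAR_a lam a) (l : ℤ) : a l * a l = 0 := by
  apply opext; rintro ⟨A, B⟩
  simp only [ContinuousLinearMap.mul_apply, ContinuousLinearMap.zero_apply]
  rw [ha l A B]
  simp only [map_add, map_smul]
  rw [ha l (insert l A) B, ha l A (B.erase l)]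
  by_cases hlA : l ∈ A <;> by_cases hlB : l ∈ B <;>
    simp [hlA, hlB, Finset.mem_insert_self, Finset.notMem_erase, pow_card_erase,
      nlt_insert_self, nlt_erase_self, smul_smul, smul_add,
      -Finset.card_erase_of_mem] <;>
    match_scalars <;> ring

set_option maxHeartbeats 2000000 in
lemma part1_lt {lam : ℤ → ℝ} {a : ℤ → CARSpace →L[ℂ] CARSpace}
    (ha : IsCAR_a lam a) {l m : ℤ} (hlm : l < m) : a l * a m + a m * a l = 0 := by
  have hne : l ≠ m := ne_of_lt hlm
  have hml : ¬ m < l := by omega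
  apply opext; rintro ⟨A, B⟩
  simp only [ContinuousLinearMap.add_apply, ContinuousLinearMap.mul_apply,
    ContinuousLinearMap.zero_apply]
  rw [ha m A B, ha l A B]
  simp only [map_add, map_smul]
  rw [ha l (insert m A) B, ha l A (B.erase m), ha m (insert l A) B, ha m A (B.erase l)]
  by_cases hlA : l ∈ A <;> by_cases hmA : m ∈ A <;> by_cases hlB : l ∈ B <;>
      by_cases hmB : m ∈ B <;>
    simp [hlA, hmA, hlB, hmB, hne, hne.symm, hlm, hml, Finset.mem_insert, Finset.mem_erase,
      pow_nlt_insert, pow_nlt_erase, pow_card_insert, pow_card_erase,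
      Finset.insert_comm m l, Finset.erase_right_comm (a := l) (b := m),
      smul_smul, smul_add, -Finset.card_erase_of_mem] <;>
    match_scalars <;> ring
lemma part2_diag {lam : ℤ → ℝ} (hlam : ∀ l, 0 < lam l ∧ lam l < 1)
    {a : ℤ → CARSpace →L[ℂ] CARSpace} (ha : IsCAR_a lam a) (l : ℤ) :
    a l * star (a l) + star (a l) * a l = 1 := by
  have h1 : ((Real.sqrt (lam l) : ℂ)) ^ 2 = (lam l : ℂ) := by
    rw [← Complex.ofReal_pow, Real.sq_sqrt (hlam l).1.le]
  have h2 : ((Real.sqrt (1 - lam l) : ℂ)) ^ 2 = 1 - (lam l : ℂ) := by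
    rw [← Complex.ofReal_pow, Real.sq_sqrt (by linarith [(hlam l).2])]
    push_cast; ring
  apply opext; rintro ⟨A, B⟩
  simp only [ContinuousLinearMap.add_apply, ContinuousLinearMap.mul_apply,
    ContinuousLinearMap.one_apply]
  rw [star_a_apply ha l A B, ha l A B]
  simp only [map_add, map_smul]
  rw [ha l (A.erase l) B, ha l A (insert l B),
    star_a_apply ha l (insert l A) B, star_a_apply ha l A (B.erase l)]
  by_cases hlA : l ∈ A <;> by_cases hlB : l ∈ B <;>
    simp [hlA, hlB, Finset.mem_insert_self, Finset.notMem_erase,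
      Finset.insert_erase, Finset.erase_insert, pow_card_erase,
      nlt_insert_self, nlt_erase_self, smul_smul, smul_add,
      -Finset.card_erase_of_mem] <;>
    match_scalars <;>
    (try ring) <;>
    (simp [pow_mul, sign_sq, h1, h2]; try ring)

set_option maxHeartbeats 2000000 in
lemma part2_lt {lam : ℤ → ℝ} {a : ℤ → CARSpace →L[ℂ] CARSpace}
    (ha : IsCAR_a lam a) {l m : ℤ} (hlm : l < m) :
    a l * star (a m) + star (a m) * a l = 0 := by
  have hne : l ≠ m := ne_of_lt hlm
  have hml : ¬ m < l := by omega
  apply opext; rintro ⟨A, B⟩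
  simp only [ContinuousLinearMap.add_apply, ContinuousLinearMap.mul_apply,
    ContinuousLinearMap.zero_apply]
  rw [star_a_apply ha m A B, ha l A B]
  simp only [map_add, map_smul]
  rw [ha l (A.erase m) B, ha l A (insert m B),
    star_a_apply ha m (insert l A) B, star_a_apply ha m A (B.erase l)]
  by_cases hlA : l ∈ A <;> by_cases hmA : m ∈ A <;> by_cases hlB : l ∈ B <;>
      by_cases hmB : m ∈ B <;>
    simp [hlA, hmA, hlB, hmB, hne, hne.symm, hlm, hml, Finset.mem_insert, Finset.mem_erase,
      pow_nlt_insert, pow_nlt_erase, pow_card_insert, pow_card_erase,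
      Finset.erase_insert_of_ne hne, Finset.erase_insert_of_ne hne.symm,
      smul_smul, smul_add, -Finset.card_erase_of_mem] <;>
    match_scalars <;> ring
/-- in the concrete quasi-free CAR model with `0 < λ_l < 1`, the operators
`a_l` satisfy the canonical anticommutation relations: for all `l, m ∈ ℤ`,
`a_l a_m + a_m a_l = 0` and `a_l a_m* + a_m* a_l = δ_{l,m}·1`. -/
theorem stmt8 (lam : ℤ → ℝ) (hlam : ∀ l, 0 < lam l ∧ lam l < 1)
    (a : ℤ → CARSpace →L[ℂ] CARSpace) (ha : IsCAR_a lam a) :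
    ∀ l m : ℤ,
      a l * a m + a m * a l = 0 ∧
      a l * star (a m) + star (a m) * a l =
        (if l = m then (1 : ℂ) else 0) • (1 : CARSpace →L[ℂ] CARSpace) := by
  intro l m
  constructor
  · rcases lt_trichotomy l m with h | h | h
    · exact part1_lt ha h
    · subst h; simp [a_sq ha l]
    · rw [add_comm]; exact part1_lt ha h
  · rcases lt_trichotomy l m with h | h | h
    · rw [if_neg (ne_of_lt h), zero_smul]
      exact part2_lt ha h
    · subst h; rw [if_pos rfl, one_smul]
      exact part2_diag hlam ha l
    · rw [if_neg (ne_of_gt h), zero_smul]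
      have H := congrArg star (part2_lt ha h)
      simpa only [star_add, star_mul, star_star, star_zero] using H

end
end

section
/- In the concrete quasi-free CAR model with past P = {n ∈ ℤ : n < 0} and future F = {n ∈ ℤ : n ≥ 0}, with any λ : ℤ → ℝ, 0 < λ_l < 1: let V be the closed linear span of {e_{(A,B)} : A ⊆ P, B ⊆ P finite, card A ≡ card B (mod 2)}. Then for every ξ ∈ V, every g ∈ P, and every operator z in the unital *-subalgebra of B(H) generated by {a_l : l ∈ F}, one has ⟨z ξ, e_{({g},∅)}⟩ = 0. (Hence the set {y·α_t(x)Ω : x ∈ M_R, y ∈ α_t(M_R)′ ∩ M_R} is orthogonal to the nonzero vector e_{({g},∅)} ∈ M_RΩ, which is the key computation showing the CAR flow is not extendable.) -/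
/- The concrete quasi-free CAR model: `H = ℓ²(Finset ℤ × Finset ℤ)` with orthonormal basis
`e (A, B)`, vacuum `Ω = e (∅, ∅)`, and operators `a l`, `b l`, `G` given on the basis by the
quasi-free formulas with symbol `λ` (diagonal, `R h_l = λ_l h_l`). -/

noncomputable section

local notation "⟪" x ", " y "⟫" => @inner ℂ _ _ x y

/-- The "past" subspace: closed linear span of the `e_{(A,B)}` with `A, B ⊆ P = {n < 0}`
and `card A ≡ card B (mod 2)`. -/
def pastSpan : Set CARSpace :=
  closure (Submodule.span ℂ
    {v : CARSpace | ∃ A B : Finset ℤ,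
      (∀ n ∈ A, n < 0) ∧ (∀ n ∈ B, n < 0) ∧ A.card % 2 = B.card % 2 ∧ v = carE (A, B)} :
    Set CARSpace)

set_option synthInstance.maxHeartbeats 400000 in
instance : T2Space CARSpace := inferInstance

namespace Stmt18Aux

/-- Number of "past" (negative) elements of a finite set. -/
def pcard (X : Finset ℤ) : ℕ := (X.filter fun n => n < 0).card

/-- The past-parity sign of a basis index. -/
def sgn (p : Finset ℤ × Finset ℤ) : ℂ := (-1) ^ (pcard p.1 + pcard p.2)

lemma norm_sgn (p : Finset ℤ × Finset ℤ) : ‖sgn p‖ = 1 := by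
  simp [sgn]

lemma conj_sgn (p : Finset ℤ × Finset ℤ) :
    (starRingEnd ℂ) (sgn p) = sgn p := by
  simp [sgn, map_pow]

lemma memU (f : CARSpace) : Memℓp (fun p => sgn p * f p) 2 := by
  apply memℓp_gen
  have h := (lp.memℓp f).summable (by norm_num : (0:ℝ) < ENNReal.toReal 2)
  refine h.congr fun p => ?_
  rw [norm_mul, norm_sgn, one_mul]

/-- The diagonal past-parity operator, as a linear map. -/
def Ulin : CARSpace →ₗ[ℂ] CARSpace where
  toFun f := ⟨fun p => sgn p * f p, memU f⟩
  map_add' f g := by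
    apply lp.ext
    funext p
    show sgn p * (f + g) p = _
    simp only [lp.coeFn_add, Pi.add_apply]
    show _ = sgn p * f p + sgn p * g p
    ring
  map_smul' c f := by
    apply lp.ext
    funext p
    show sgn p * (c • f) p = _
    simp only [lp.coeFn_smul, Pi.smul_apply, smul_eq_mul]
    show _ = c * (sgn p * f p)
    ring

lemma Ulin_apply (f : CARSpace) (p : Finset ℤ × Finset ℤ) :
    (Ulin f : ∀ _ : Finset ℤ × Finset ℤ, ℂ) p = sgn p * f p := rfl

lemma norm_Ulin (f : CARSpace) : ‖Ulin f‖ = ‖f‖ := by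
  have h2 : (0:ℝ) < ENNReal.toReal 2 := by norm_num
  rw [lp.norm_eq_tsum_rpow h2, lp.norm_eq_tsum_rpow h2]
  congr 1
  refine tsum_congr fun p => ?_
  rw [Ulin_apply, norm_mul, norm_sgn, one_mul]

/-- The diagonal past-parity operator. -/
def U : CARSpace →L[ℂ] CARSpace :=
  Ulin.mkContinuous 1 (fun f => by rw [norm_Ulin]; simp)

lemma U_apply (f : CARSpace) (p : Finset ℤ × Finset ℤ) :
    (U f : ∀ _ : Finset ℤ × Finset ℤ, ℂ) p = sgn p * f p := rfl

lemma U_inner (x y : CARSpace) : ⟪U x, y⟫ = ⟪x, U y⟫ := by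
  rw [lp.inner_eq_tsum, lp.inner_eq_tsum]
  refine tsum_congr fun p => ?_
  simp only [RCLike.inner_apply]
  rw [U_apply, U_apply, map_mul, conj_sgn]
  ring

lemma U_carE (p : Finset ℤ × Finset ℤ) : U (carE p) = sgn p • carE p := by
  apply lp.ext
  funext q
  rw [lp.coeFn_smul, Pi.smul_apply]
  show sgn q * (carE p : ∀ _, ℂ) q = sgn p • (carE p : ∀ _, ℂ) q
  unfold carE
  rcases eq_or_ne q p with rfl | h
  · simp [lp.single_apply_self]
  · simp [lp.single_apply_ne _ _ _ h, Pi.single_apply, h]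

lemma U_adjoint : ContinuousLinearMap.adjoint U = U := by
  symm
  rw [ContinuousLinearMap.eq_adjoint_iff]
  exact U_inner

lemma dense_span_carE :
    Dense ((Submodule.span ℂ (Set.range carE) : Submodule ℂ CARSpace) : Set CARSpace) := by
  rw [Submodule.dense_iff_topologicalClosure_eq_top,
    Submodule.topologicalClosure_eq_top_iff]
  rw [Submodule.eq_bot_iff]
  intro x hx
  apply lp.ext
  funext p
  have h : ⟪carE p, x⟫ = 0 :=
    hx _ (Submodule.subset_span ⟨p, rfl⟩)
  rw [carE, lp.inner_single_left] at h
  simpa using h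

lemma pcard_insert_of_nonneg {l : ℤ} (hl : 0 ≤ l) (A : Finset ℤ) :
    pcard (insert l A) = pcard A := by
  unfold pcard
  rw [Finset.filter_insert, if_neg (by omega)]

lemma pcard_erase_of_nonneg {l : ℤ} (hl : 0 ≤ l) (B : Finset ℤ) :
    pcard (B.erase l) = pcard B := by
  unfold pcard
  rw [Finset.filter_erase, Finset.erase_eq_of_notMem]
  intro h
  have := Finset.mem_filter.1 h
  omega

lemma U_comm_a (lam : ℤ → ℝ) (a : ℤ → CARSpace →L[ℂ] CARSpace) (ha : IsCAR_a lam a)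
    {l : ℤ} (hl : 0 ≤ l) : U * a l = a l * U := by
  have : U.comp (a l) = (a l).comp U := by
    refine ContinuousLinearMap.ext_on dense_span_carE ?_
    rintro _ ⟨⟨A, B⟩, rfl⟩
    show U (a l (carE (A, B))) = a l (U (carE (A, B)))
    rw [ha l A B, U_carE, map_smul, ha l A B]
    rw [map_add, map_smul, map_smul, U_carE, U_carE]
    have h1 : sgn (insert l A, B) = sgn (A, B) := by
      unfold sgn
      simp [pcard_insert_of_nonneg hl]
    have h2 : sgn (A, B.erase l) = sgn (A, B) := by
      unfold sgn
      simp [pcard_erase_of_nonneg hl]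
    rw [h1, h2, smul_add, smul_smul, smul_smul, smul_smul, smul_smul,
      mul_comm (sgn (A, B))]
    congr 1
    rw [mul_comm]
  exact this

lemma U_comm (lam : ℤ → ℝ) (a : ℤ → CARSpace →L[ℂ] CARSpace) (ha : IsCAR_a lam a)
    {z : CARSpace →L[ℂ] CARSpace}
    (hz : z ∈ StarAlgebra.adjoin ℂ
      {x : CARSpace →L[ℂ] CARSpace | ∃ l : ℤ, 0 ≤ l ∧ x = a l}) :
    U * z = z * U := by
  induction hz using StarAlgebra.adjoin_induction with
  | mem x hx =>
    obtain ⟨l, hl, rfl⟩ := hx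
    exact U_comm_a lam a ha hl
  | algebraMap r => exact (Algebra.commutes r U).symm
  | add x y hx hy ihx ihy => rw [mul_add, add_mul, ihx, ihy]
  | mul x y hx hy ihx ihy => rw [← mul_assoc, ihx, mul_assoc, ihy, mul_assoc]
  | star x hx ih =>
    have hU : star U = U := by rw [ContinuousLinearMap.star_eq_adjoint, U_adjoint]
    have h2 := congrArg star ih
    rw [star_mul, star_mul, hU] at h2
    exact h2.symm

end Stmt18Aux

/-- let `V` be the closed linear span of
`{e_{(A,B)} : A, B ⊆ P finite, card A ≡ card B (mod 2)}`. Then for every `ξ ∈ V`, every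
`g ∈ P = {n < 0}`, and every operator `z` in the unital *-subalgebra of `B(H)` generated by
`{a_l : l ∈ F = {n ≥ 0}}`, one has `⟨z ξ, e_{({g},∅)}⟩ = 0`. -/
theorem stmt18 (lam : ℤ → ℝ) (hlam : ∀ l, 0 < lam l ∧ lam l < 1)
    (a : ℤ → CARSpace →L[ℂ] CARSpace) (ha : IsCAR_a lam a)
    (ξ : CARSpace) (hξ : ξ ∈ pastSpan)
    (g : ℤ) (hg : g < 0)
    (z : CARSpace →L[ℂ] CARSpace)
    (hz : z ∈ StarAlgebra.adjoin ℂ {x : CARSpace →L[ℂ] CARSpace | ∃ l : ℤ, 0 ≤ l ∧ x = a l}) :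
    ⟪z ξ, carE ({g}, ∅)⟫ = 0 := by
  open Stmt18Aux in
  have hcomm : U * z = z * U := U_comm lam a ha hz
  -- U fixes ξ
  have hfix : U ξ = ξ := by
    have hsub : (Submodule.span ℂ
        {v : CARSpace | ∃ A B : Finset ℤ,
          (∀ n ∈ A, n < 0) ∧ (∀ n ∈ B, n < 0) ∧ A.card % 2 = B.card % 2 ∧ v = carE (A, B)} :
        Set CARSpace) ⊆ {x : CARSpace | U x = x} := by
      intro v hv
      induction hv using Submodule.span_induction with
      | mem v hv =>
        obtain ⟨A, B, hA, hB, hcard, rfl⟩ := hv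
        show U (carE (A, B)) = carE (A, B)
        rw [U_carE]
        have h1 : pcard A = A.card := by
          unfold pcard
          rw [Finset.filter_true_of_mem hA]
        have h2 : pcard B = B.card := by
          unfold pcard
          rw [Finset.filter_true_of_mem hB]
        have hev : Even (pcard (A, B).1 + pcard (A, B).2) := by
          simp only [h1, h2]
          rw [Nat.even_add, Nat.even_iff, Nat.even_iff, hcard]
        have : sgn (A, B) = 1 := by
          rw [sgn, hev.neg_one_pow]
        rw [this, one_smul]
      | zero => show U 0 = 0; simp
      | add x y hx hy ihx ihy => show U (x + y) = x + y; rw [map_add, ihx, ihy]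
      | smul c x hx ih => show U (c • x) = c • x; rw [map_smul, ih]
    have hcl : closure (Submodule.span ℂ
        {v : CARSpace | ∃ A B : Finset ℤ,
          (∀ n ∈ A, n < 0) ∧ (∀ n ∈ B, n < 0) ∧ A.card % 2 = B.card % 2 ∧ v = carE (A, B)} :
        Set CARSpace) ⊆ {x : CARSpace | U x = x} := by
      apply closure_minimal hsub
      exact isClosed_eq U.continuous continuous_id
    exact hcl hξ
  -- U negates the target vector
  have hneg : U (carE ({g}, ∅)) = -carE ({g}, ∅) := by
    rw [U_carE]
    have : sgn (({g} : Finset ℤ), (∅ : Finset ℤ)) = -1 := by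
      rw [sgn]
      have h1 : pcard {g} = 1 := by
        unfold pcard
        rw [Finset.filter_singleton, if_pos hg, Finset.card_singleton]
      have h2 : pcard (∅ : Finset ℤ) = 0 := by simp [pcard]
      rw [h1, h2]
      norm_num
    rw [this]
    simp
  have key : ⟪z ξ, carE ({g}, ∅)⟫ = -⟪z ξ, carE ({g}, ∅)⟫ := by
    conv_lhs => rw [← hfix]
    have hzU : z (U ξ) = U (z ξ) := by
      have := congrArg (fun T : CARSpace →L[ℂ] CARSpace => T ξ) hcomm
      exact this.symm
    rw [hzU, U_inner, hneg, inner_neg_right]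
  linear_combination key / 2

end
end
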